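/- Collapse of the double integral I₃: let 0 < E₀ < E and let Ψ be continuously differentiable on [E₀, E]. Then −36 ∫_{E₀}^{E} (E−u)^{−1/2} ( ∫_{E₀}^{u} arctan(√((u−v)/v)) Ψ′(v) dv ) du = 36π ∫_{E₀}^{E} (√v − √E) Ψ′(v) dv; equivalently, the left-hand side equals 36π ∫_{E₀}^{E} (v − √(E v)) Ψ′(v) v^{−1/2} dv. -/

import Mathlib

open Set MeasureTheory Real

lemma dA (v E u : ℝ) (hv : 0 < v) (h1 : v < u) (h2 : u < E) :
    HasDerivAt (fun u => 2 * Real.sqrt E * Real.arctan (Real.sqrt (E * (u - v) / (v * (E - u)))))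
      (E * Real.sqrt v / (u * (Real.sqrt (E - u) * Real.sqrt (u - v)))) u := by
  have hu0 : 0 < u := hv.trans h1
  have hs : 0 < u - v := by linarith
  have ht : 0 < E - u := by linarith
  have hE0 : 0 < E := hu0.trans h2
  have hN : HasDerivAt (fun u => E * (u - v)) E u := by
    simpa using ((hasDerivAt_id u).sub_const v).const_mul E
  have hD : HasDerivAt (fun u => v * (E - u)) (-v) u := by
    simpa using ((hasDerivAt_id u).const_sub E).const_mul v
  have hDne : v * (E - u) ≠ 0 := by positivity
  have hq := hN.div hD hDne
  have hg0 : E * (u - v) / (v * (E - u)) ≠ 0 := by positivity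
  have h := ((hq.sqrt hg0).arctan).const_mul (2 * Real.sqrt E)
  convert h using 1
  · rfl
  · rfl
  · rfl
  simp only [Pi.div_apply]
  have hsq : Real.sqrt (E * (u - v) / (v * (E - u))) ^ 2 = E * (u - v) / (v * (E - u)) :=
    Real.sq_sqrt (by positivity)
  have hrepr : Real.sqrt (E * (u - v) / (v * (E - u)))
      = Real.sqrt E * Real.sqrt (u - v) / (Real.sqrt v * Real.sqrt (E - u)) := by
    rw [Real.sqrt_div (by positivity), Real.sqrt_mul hE0.le, Real.sqrt_mul hv.le]
  rw [hsq, hrepr]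
  have e2 : Real.sqrt E ^ 2 = E := Real.sq_sqrt hE0.le
  have a2 : Real.sqrt v ^ 2 = v := Real.sq_sqrt hv.le
  have b2 : Real.sqrt (u - v) ^ 2 = u - v := Real.sq_sqrt hs.le
  have c2 : Real.sqrt (E - u) ^ 2 = E - u := Real.sq_sqrt ht.le
  have e0 : Real.sqrt E ≠ 0 := by positivity
  have a0 : Real.sqrt v ≠ 0 := by positivity
  have b0 : Real.sqrt (u - v) ≠ 0 := by positivity
  have c0 : Real.sqrt (E - u) ≠ 0 := by positivity
  field_simp
  generalize hcc : Real.sqrt (E - u) = c at *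
  rw [← c2]
  linear_combination (-(c^2*(u-v))) * c2

lemma dB (v E u : ℝ) (hv : 0 < v) (h1 : v < u) (h2 : u < E) :
    HasDerivAt (fun u => 2 * Real.sqrt v * Real.arctan (Real.sqrt ((u - v) / (E - u))))
      (Real.sqrt v / (Real.sqrt (u - v) * Real.sqrt (E - u))) u := by
  have hs : 0 < u - v := by linarith
  have ht : 0 < E - u := by linarith
  have hq := (((hasDerivAt_id u).sub_const v).div ((hasDerivAt_id u).const_sub E)
    (by positivity : E - u ≠ 0))
  have hg0 : (u - v) / (E - u) ≠ 0 := by positivity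
  have h := ((hq.sqrt hg0).arctan).const_mul (2 * Real.sqrt v)
  convert h using 1
  · rfl
  · rfl
  · rfl
  simp only [id_eq, Pi.div_apply]
  have hsq : Real.sqrt ((u - v) / (E - u)) ^ 2 = (u - v) / (E - u) :=
    Real.sq_sqrt (by positivity)
  have hrepr : Real.sqrt ((u - v) / (E - u)) = Real.sqrt (u - v) / Real.sqrt (E - u) :=
    Real.sqrt_div hs.le _
  rw [hsq, hrepr]
  have b2 : Real.sqrt (u - v) ^ 2 = u - v := Real.sq_sqrt hs.le
  have c2 : Real.sqrt (E - u) ^ 2 = E - u := Real.sq_sqrt ht.le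
  have a0 : Real.sqrt v ≠ 0 := by positivity
  have b0 : Real.sqrt (u - v) ≠ 0 := by positivity
  have c0 : Real.sqrt (E - u) ≠ 0 := by positivity
  have hEv : E - v ≠ 0 := by have : (0:ℝ) < E - v := by linarith
                             exact ne_of_gt this
  field_simp [hEv]
  generalize Real.sqrt (E - u) = c at *
  rw [← c2]
  ring

lemma dC (v E u : ℝ) (hv : 0 < v) (h1 : v < u) (h2 : u < E) :
    HasDerivAt (fun u => 2 * Real.sqrt (E - u) * Real.arctan (Real.sqrt ((u - v) / v)))
      (-(Real.arctan (Real.sqrt ((u - v) / v)) / Real.sqrt (E - u))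
        + Real.sqrt (E - u) * Real.sqrt v / (u * Real.sqrt (u - v))) u := by
  have hu0 : 0 < u := hv.trans h1
  have hs : 0 < u - v := by linarith
  have ht : 0 < E - u := by linarith
  have hf : HasDerivAt (fun u => 2 * Real.sqrt (E - u)) (2 * (-1 / (2 * Real.sqrt (E - u)))) u := by
    have := (((hasDerivAt_id u).const_sub E).sqrt (by positivity : E - u ≠ 0)).const_mul 2
    simpa using this
  have hq := ((hasDerivAt_id u).sub_const v).div_const v
  have hg0 : (u - v) / v ≠ 0 := by positivity
  have hg := (hq.sqrt hg0).arctan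
  have h := hf.mul hg
  convert h using 1
  · rfl
  · rfl
  · rfl
  simp only [id_eq]
  have hsq : Real.sqrt ((u - v) / v) ^ 2 = (u - v) / v := Real.sq_sqrt (by positivity)
  have hrepr : Real.sqrt ((u - v) / v) = Real.sqrt (u - v) / Real.sqrt v :=
    Real.sqrt_div hs.le _
  rw [hsq]
  rw [hrepr]
  have a2 : Real.sqrt v ^ 2 = v := Real.sq_sqrt hv.le
  have b2 : Real.sqrt (u - v) ^ 2 = u - v := Real.sq_sqrt hs.le
  have a0 : Real.sqrt v ≠ 0 := by positivity
  have b0 : Real.sqrt (u - v) ≠ 0 := by positivity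
  have c0 : Real.sqrt (E - u) ≠ 0 := by positivity
  field_simp
  ring


lemma measKernel (v E : ℝ) :
    Measurable (fun u => Real.arctan (Real.sqrt ((u - v) / v)) / Real.sqrt (E - u)) := by
  have h1 : Continuous fun u : ℝ => Real.arctan (Real.sqrt ((u - v) / v)) := by
    exact Real.continuous_arctan.comp (Real.continuous_sqrt.comp (by continuity))
  exact h1.measurable.div (Real.continuous_sqrt.comp (by continuity)).measurable

lemma intInt (v E a b : ℝ) (hab : a ≤ b) (hb : b ≤ E) :
    IntervalIntegrable (fun u => Real.arctan (Real.sqrt ((u - v) / v)) / Real.sqrt (E - u))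
      volume a b := by
  have hg : IntervalIntegrable (fun u => (π/2) * (E - u) ^ (-(1/2) : ℝ)) volume a b := by
    apply IntervalIntegrable.const_mul
    have h0 : IntervalIntegrable (fun x : ℝ => x ^ (-(1/2) : ℝ)) volume (E - a) (E - b) :=
      intervalIntegral.intervalIntegrable_rpow' (by norm_num)
    simpa using h0.comp_sub_left E
  rw [intervalIntegrable_iff] at hg ⊢
  apply hg.mono' ((measKernel v E).aestronglyMeasurable.restrict)
  filter_upwards [ae_restrict_mem measurableSet_uIoc] with u hu
  rw [uIoc_of_le hab] at hu
  have huE : u ≤ E := hu.2.trans hb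
  have hrw : (E - u) ^ (-(1/2) : ℝ) = (Real.sqrt (E - u))⁻¹ := by
    rw [Real.rpow_neg (by linarith), Real.sqrt_eq_rpow]
  rw [hrw, Real.norm_eq_abs, div_eq_mul_inv, abs_mul, abs_inv,
    abs_of_nonneg (Real.sqrt_nonneg _)]
  apply mul_le_mul_of_nonneg_right _ (inv_nonneg.mpr (Real.sqrt_nonneg _))
  exact abs_le.2 ⟨(neg_pi_div_two_lt_arctan _).le, (Real.arctan_lt_pi_div_two _).le⟩

lemma contAux {f : ℝ → ℝ} {x : ℝ} (hf : ContinuousAt f x) :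
    ContinuousAt (fun t => Real.arctan (Real.sqrt (f t))) x :=
  Real.continuousAt_arctan.comp hf.sqrt

lemma sqrt_tendsto_atTop : Filter.Tendsto Real.sqrt Filter.atTop Filter.atTop := by
  apply Filter.tendsto_atTop_atTop.mpr
  intro b
  refine ⟨b ^ 2, fun a ha => ?_⟩
  calc b ≤ |b| := le_abs_self b
    _ = Real.sqrt (b ^ 2) := (Real.sqrt_sq_eq_abs b).symm
    _ ≤ Real.sqrt a := Real.sqrt_le_sqrt ha

lemma key (v E : ℝ) (hv : 0 < v) (hvE : v < E) :
    ∫ u in v..E, Real.arctan (Real.sqrt ((u - v) / v)) / Real.sqrt (E - u)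
      = π * Real.sqrt E - π * Real.sqrt v := by
  have hE0 : 0 < E := hv.trans hvE
  set F : ℝ → ℝ := fun u =>
    2 * Real.sqrt E * Real.arctan (Real.sqrt (E * (u - v) / (v * (E - u))))
    - 2 * Real.sqrt v * Real.arctan (Real.sqrt ((u - v) / (E - u)))
    - 2 * Real.sqrt (E - u) * Real.arctan (Real.sqrt ((u - v) / v)) with hF
  have hderiv : ∀ u ∈ Ioo v E,
      HasDerivAt F (Real.arctan (Real.sqrt ((u - v) / v)) / Real.sqrt (E - u)) u := by
    intro u hu
    have h := ((dA v E u hv hu.1 hu.2).sub (dB v E u hv hu.1 hu.2)).sub (dC v E u hv hu.1 hu.2)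
    convert h using 1
    · rfl
    · rfl
    · rfl
    have hs : 0 < u - v := by linarith [hu.1]
    have ht : 0 < E - u := by linarith [hu.2]
    have hu0 : 0 < u := hv.trans hu.1
    have c2 : Real.sqrt (E - u) ^ 2 = E - u := Real.sq_sqrt ht.le
    have a0 : Real.sqrt v ≠ 0 := by positivity
    have b0 : Real.sqrt (u - v) ≠ 0 := by positivity
    have c0 : Real.sqrt (E - u) ≠ 0 := by positivity
    field_simp
    generalize Real.sqrt (E - u) = c at *
    have hE2 : E = c ^ 2 + u := by linarith
    rw [hE2]
    ring
  have hint : IntervalIntegrable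
      (fun u => Real.arctan (Real.sqrt ((u - v) / v)) / Real.sqrt (E - u)) volume v E :=
    intInt v E v E hvE.le le_rfl
  have ha : Filter.Tendsto F (nhdsWithin v (Ioi v)) (nhds 0) := by
    have h1 : ContinuousAt (fun u : ℝ => E * (u - v) / (v * (E - u))) v := by
      apply ContinuousAt.div
      · fun_prop
      · fun_prop
      · show v * (E - v) ≠ 0
        have : (0:ℝ) < v * (E - v) := by nlinarith
        exact this.ne'
    have h2 : ContinuousAt (fun u : ℝ => (u - v) / (E - u)) v := by
      apply ContinuousAt.div
      · fun_prop
      · fun_prop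
      · show E - v ≠ 0
        have : (0:ℝ) < E - v := by linarith
        exact this.ne'
    have h3 : ContinuousAt (fun u : ℝ => (u - v) / v) v :=
      (continuousAt_id.sub continuousAt_const).div_const v
    have h4 : ContinuousAt (fun u : ℝ => 2 * Real.sqrt (E - u)) v := by fun_prop
    have hc : ContinuousAt F v :=
      ((continuousAt_const.mul (contAux h1)).sub
        (continuousAt_const.mul (contAux h2))).sub (h4.mul (contAux h3))
    have hv0 : F v = 0 := by simp [hF]
    exact hv0 ▸ (hc.continuousWithinAt.tendsto)
  have hb : Filter.Tendsto F (nhdsWithin E (Iio E)) (nhds (π * Real.sqrt E - π * Real.sqrt v)) := by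
    have hEmu : Filter.Tendsto (fun u => E - u) (nhdsWithin E (Iio E)) (nhdsWithin 0 (Ioi 0)) := by
      apply tendsto_nhdsWithin_of_tendsto_nhds_of_eventually_within
      · have hcont : Continuous (fun u : ℝ => E - u) := by fun_prop
        have : Filter.Tendsto (fun u : ℝ => E - u) (nhds E) (nhds 0) := by
          simpa using hcont.tendsto E
        exact this.mono_left nhdsWithin_le_nhds
      · filter_upwards [self_mem_nhdsWithin] with u hu
        have : u < E := hu
        simp only [mem_Ioi]
        linarith
    have hinv : Filter.Tendsto (fun u => (E - u)⁻¹) (nhdsWithin E (Iio E)) Filter.atTop :=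
      tendsto_inv_nhdsGT_zero.comp hEmu
    have harct : ∀ g : ℝ → ℝ, Filter.Tendsto g (nhdsWithin E (Iio E)) Filter.atTop →
        Filter.Tendsto (fun u => Real.arctan (Real.sqrt (g u))) (nhdsWithin E (Iio E))
          (nhds (π / 2)) := fun g hg =>
      (Real.tendsto_arctan_atTop.mono_right nhdsWithin_le_nhds).comp (sqrt_tendsto_atTop.comp hg)
    have T1 : Filter.Tendsto (fun u => 2 * Real.sqrt E *
        Real.arctan (Real.sqrt (E * (u - v) / (v * (E - u))))) (nhdsWithin E (Iio E))
        (nhds (2 * Real.sqrt E * (π / 2))) := by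
      apply Filter.Tendsto.const_mul
      apply harct
      have hfac : Filter.Tendsto (fun u => E * (u - v) / v) (nhdsWithin E (Iio E))
          (nhds (E * (E - v) / v)) := by
        apply Filter.Tendsto.mono_left _ nhdsWithin_le_nhds
        exact ((continuous_const.mul (continuous_id.sub continuous_const)).div_const v).tendsto E
      have := hfac.pos_mul_atTop (div_pos (mul_pos hE0 (by linarith)) hv) hinv
      apply this.congr
      intro u
      rw [← div_eq_mul_inv, div_div]
    have T2 : Filter.Tendsto (fun u => 2 * Real.sqrt v *
        Real.arctan (Real.sqrt ((u - v) / (E - u)))) (nhdsWithin E (Iio E))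
        (nhds (2 * Real.sqrt v * (π / 2))) := by
      apply Filter.Tendsto.const_mul
      apply harct
      have hfac : Filter.Tendsto (fun u => u - v) (nhdsWithin E (Iio E)) (nhds (E - v)) :=
        (((continuous_id.sub continuous_const)).tendsto E).mono_left nhdsWithin_le_nhds
      have := hfac.pos_mul_atTop (by linarith : (0:ℝ) < E - v) hinv
      apply this.congr
      intro u
      exact (div_eq_mul_inv _ _).symm
    have T3 : Filter.Tendsto (fun u => 2 * Real.sqrt (E - u) *
        Real.arctan (Real.sqrt ((u - v) / v))) (nhdsWithin E (Iio E)) (nhds 0) := by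
      have hc : ContinuousAt (fun u => 2 * Real.sqrt (E - u) *
          Real.arctan (Real.sqrt ((u - v) / v))) E := by
        apply ContinuousAt.mul
        · fun_prop
        · exact contAux ((continuousAt_id.sub continuousAt_const).div_const v)
      have h0 : (fun u => 2 * Real.sqrt (E - u) * Real.arctan (Real.sqrt ((u - v) / v))) E
          = 0 := by simp
      exact h0 ▸ hc.continuousWithinAt.tendsto
    have := (T1.sub T2).sub T3
    convert this using 1
    ring
  have := intervalIntegral.integral_eq_sub_of_hasDerivAt_of_tendsto hvE hderiv hint ha hb
  rw [this]
  ring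

lemma arctan_vanish (u v : ℝ) (h : u ≤ v) (hv : 0 < v) :
    Real.arctan (Real.sqrt ((u - v) / v)) = 0 := by
  have h1 : (u - v) / v ≤ 0 := div_nonpos_of_nonpos_of_nonneg (sub_nonpos.2 h) hv.le
  rw [Real.sqrt_eq_zero_of_nonpos h1, Real.arctan_zero]

/-- Collapse of the double integral `I₃`:
`−36 ∫_{E₀}^E (E−u)^{−1/2} ∫_{E₀}^u arctan(√((u−v)/v)) Ψ′(v) dv du
  = 36π ∫_{E₀}^E (√v − √E) Ψ′(v) dv
  = 36π ∫_{E₀}^E (v − √(Ev)) Ψ′(v) v^{−1/2} dv`. -/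
theorem collapse_I3 (E₀ E : ℝ) (hE₀ : 0 < E₀) (hE : E₀ < E)
    (Ψ Ψ' : ℝ → ℝ)
    (hΨ : ∀ v ∈ Icc E₀ E, HasDerivWithinAt Ψ (Ψ' v) (Icc E₀ E) v)
    (hΨ' : ContinuousOn Ψ' (Icc E₀ E)) :
    (-36 * ∫ u in E₀..E,
        (∫ v in E₀..u, Real.arctan (Real.sqrt ((u - v) / v)) * Ψ' v) / Real.sqrt (E - u))
      = 36 * π * ∫ v in E₀..E, (Real.sqrt v - Real.sqrt E) * Ψ' v ∧
    (-36 * ∫ u in E₀..E,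
        (∫ v in E₀..u, Real.arctan (Real.sqrt ((u - v) / v)) * Ψ' v) / Real.sqrt (E - u))
      = 36 * π * ∫ v in E₀..E, (v - Real.sqrt (E * v)) * Ψ' v / Real.sqrt v := by
  have hE0 : (0:ℝ) < E := hE₀.trans hE
  -- continuous extension of Ψ'
  set g : ℝ → ℝ := (Icc E₀ E).restrict Ψ' ∘ Set.projIcc E₀ E hE.le with hgdef
  have hgcont : Continuous g := (ContinuousOn.restrict hΨ').comp continuous_projIcc
  have hgeq : ∀ v ∈ Icc E₀ E, Ψ' v = g v := by
    intro v hv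
    simp [hgdef, Set.projIcc_of_mem hE.le hv]
    rfl
  obtain ⟨M, hM⟩ := isCompact_Icc.exists_bound_of_continuousOn
    (hgcont.continuousOn (s := Icc E₀ E))
  -- the kernel
  set H : ℝ → ℝ → ℝ :=
    fun u v => Real.arctan (Real.sqrt ((u - v) / v)) * g v / Real.sqrt (E - u) with hHdef
  -- Step 1: rewrite the LHS integral
  have step1 : (∫ u in E₀..E,
        (∫ v in E₀..u, Real.arctan (Real.sqrt ((u - v) / v)) * Ψ' v) / Real.sqrt (E - u))
      = ∫ u in E₀..E, ∫ v in E₀..E, H u v := by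
    apply intervalIntegral.integral_congr
    intro u hu
    rw [uIcc_of_le hE.le] at hu
    beta_reduce
    have huE : u ≤ E := hu.2
    have h1 : (∫ v in E₀..u, Real.arctan (Real.sqrt ((u - v) / v)) * Ψ' v)
        = ∫ v in E₀..u, Real.arctan (Real.sqrt ((u - v) / v)) * g v := by
      apply intervalIntegral.integral_congr
      intro v hv
      rw [uIcc_of_le hu.1] at hv
      beta_reduce
      rw [hgeq v ⟨hv.1, hv.2.trans huE⟩]
    have hcontk : ContinuousOn (fun v => Real.arctan (Real.sqrt ((u - v) / v)) * g v)
        (Icc E₀ E) := by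
      apply ContinuousOn.mul _ hgcont.continuousOn
      apply Real.continuous_arctan.comp_continuousOn
      apply Real.continuous_sqrt.comp_continuousOn
      exact ContinuousOn.div (by fun_prop) (by fun_prop)
        (fun v hv => (hE₀.trans_le hv.1).ne')
    have h2 : (∫ v in u..E, Real.arctan (Real.sqrt ((u - v) / v)) * g v) = 0 := by
      rw [← intervalIntegral.integral_zero (a := u) (b := E) (μ := volume) (E := ℝ)]
      apply intervalIntegral.integral_congr
      intro v hv
      rw [uIcc_of_le huE] at hv
      beta_reduce
      rw [arctan_vanish u v hv.1 (hE₀.trans_le (hu.1.trans hv.1))]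
      simp
    have h3 : (∫ v in E₀..u, Real.arctan (Real.sqrt ((u - v) / v)) * g v)
        = ∫ v in E₀..E, Real.arctan (Real.sqrt ((u - v) / v)) * g v := by
      rw [← intervalIntegral.integral_add_adjacent_intervals (b := u) (c := E)
        ((hcontk.mono (by rw [uIcc_of_le hu.1]; exact fun x hx => ⟨hx.1, hx.2.trans huE⟩)).intervalIntegrable)
        ((hcontk.mono (by rw [uIcc_of_le huE]; exact fun x hx => ⟨hu.1.trans hx.1, hx.2⟩)).intervalIntegrable),
        h2, add_zero]
    rw [h1, h3, hHdef]
    simp only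
    rw [← intervalIntegral.integral_div]
  -- Step 2: Fubini
  have hbint : Integrable (Function.uncurry H)
      ((volume.restrict (Ioc E₀ E)).prod (volume.restrict (Ioc E₀ E))) := by
    have hmeas : Measurable (Function.uncurry H) := by
      have m1 : Measurable fun p : ℝ × ℝ => (p.1 - p.2) / p.2 :=
        (measurable_fst.sub measurable_snd).div measurable_snd
      have m2 : Measurable fun p : ℝ × ℝ => Real.arctan (Real.sqrt ((p.1 - p.2) / p.2)) :=
        (Real.continuous_arctan.comp Real.continuous_sqrt).measurable.comp m1
      exact (m2.mul (hgcont.measurable.comp measurable_snd)).div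
        ((Real.continuous_sqrt.comp (continuous_const.sub continuous_fst)).measurable)
    have hf : Integrable (fun u => (π/2) * (E - u) ^ (-(1/2) : ℝ))
        (volume.restrict (Ioc E₀ E)) := by
      have h0 : IntervalIntegrable (fun u => (π/2) * (E - u) ^ (-(1/2) : ℝ)) volume E₀ E := by
        apply IntervalIntegrable.const_mul
        have h1 : IntervalIntegrable (fun x : ℝ => x ^ (-(1/2) : ℝ)) volume (E - E₀) (E - E) :=
          intervalIntegral.intervalIntegrable_rpow' (by norm_num)
        simpa using h1.comp_sub_left E
      rwa [intervalIntegrable_iff, uIoc_of_le hE.le] at h0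
    have hc : Integrable (fun _ : ℝ => |M| + 1) (volume.restrict (Ioc E₀ E)) :=
      integrableOn_const measure_Ioc_lt_top.ne
    have hprod := hf.mul_prod hc
    apply hprod.mono' hmeas.aestronglyMeasurable
    have hmem : ∀ᵐ z ∂((volume.restrict (Ioc E₀ E)).prod (volume.restrict (Ioc E₀ E))),
        z ∈ Ioc E₀ E ×ˢ Ioc E₀ E := by
      rw [Measure.prod_restrict]
      exact ae_restrict_mem (measurableSet_Ioc.prod measurableSet_Ioc)
    filter_upwards [hmem] with z hz
    obtain ⟨hz1, hz2⟩ := hz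
    have hrw : (E - z.1) ^ (-(1/2) : ℝ) = (Real.sqrt (E - z.1))⁻¹ := by
      rw [Real.rpow_neg (by linarith [hz1.2]), Real.sqrt_eq_rpow]
    have h1 : |Real.arctan (Real.sqrt ((z.1 - z.2) / z.2))| ≤ π/2 :=
      abs_le.2 ⟨(neg_pi_div_two_lt_arctan _).le, (Real.arctan_lt_pi_div_two _).le⟩
    have h2 : |g z.2| ≤ |M| + 1 := by
      have := hM z.2 ⟨hz2.1.le, hz2.2⟩
      rw [Real.norm_eq_abs] at this
      calc |g z.2| ≤ M := this
        _ ≤ |M| := le_abs_self M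
        _ ≤ |M| + 1 := by linarith
    rw [Function.uncurry, hHdef]
    simp only
    rw [Real.norm_eq_abs, abs_div, abs_mul, abs_of_nonneg (Real.sqrt_nonneg _),
      div_eq_mul_inv, hrw]
    calc |Real.arctan (Real.sqrt ((z.1 - z.2) / z.2))| * |g z.2| * (Real.sqrt (E - z.1))⁻¹
        ≤ (π/2) * (|M| + 1) * (Real.sqrt (E - z.1))⁻¹ := by
          apply mul_le_mul_of_nonneg_right _ (inv_nonneg.mpr (Real.sqrt_nonneg _))
          exact mul_le_mul h1 h2 (abs_nonneg _) (by positivity)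
      _ = π / 2 * (Real.sqrt (E - z.1))⁻¹ * (|M| + 1) := by ring
  have step2 : (∫ u in E₀..E, ∫ v in E₀..E, H u v)
      = ∫ v in Ioc E₀ E, ∫ u in Ioc E₀ E, H u v := by
    simp_rw [intervalIntegral.integral_of_le hE.le]
    exact MeasureTheory.integral_integral_swap hbint
  -- Step 3: inner integral collapse
  have step3 : (∫ v in Ioc E₀ E, ∫ u in Ioc E₀ E, H u v)
      = ∫ v in Ioc E₀ E, g v * (π * Real.sqrt E - π * Real.sqrt v) := by
    apply setIntegral_congr_fun measurableSet_Ioc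
    intro v hv
    have hv0 : 0 < v := hE₀.trans hv.1
    simp only
    rw [← intervalIntegral.integral_of_le hE.le]
    have hpt : ∀ u, H u v
        = g v * (Real.arctan (Real.sqrt ((u - v) / v)) / Real.sqrt (E - u)) := by
      intro u; rw [hHdef]; simp only; ring
    simp only [hpt]
    rw [intervalIntegral.integral_const_mul]
    congr 1
    rcases eq_or_lt_of_le hv.2 with hvE | hvE
    · subst hvE
      have hz : (∫ u in E₀..v, Real.arctan (Real.sqrt ((u - v) / v)) / Real.sqrt (v - u)) = 0 := by
        rw [← intervalIntegral.integral_zero (a := E₀) (b := v) (μ := volume) (E := ℝ)]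
        apply intervalIntegral.integral_congr
        intro u hu
        rw [uIcc_of_le hv.1.le] at hu
        beta_reduce
        rw [arctan_vanish u v hu.2 hv0, zero_div]
      rw [hz]
      simp
    · have hzero : (∫ u in E₀..v, Real.arctan (Real.sqrt ((u - v) / v)) / Real.sqrt (E - u)) = 0 := by
        rw [← intervalIntegral.integral_zero (a := E₀) (b := v) (μ := volume) (E := ℝ)]
        apply intervalIntegral.integral_congr
        intro u hu
        rw [uIcc_of_le hv.1.le] at hu
        beta_reduce
        rw [arctan_vanish u v hu.2 hv0, zero_div]
      rw [← intervalIntegral.integral_add_adjacent_intervals (b := v) (c := E)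
        (intInt v E E₀ v hv.1.le hv.2) (intInt v E v E hv.2 le_rfl),
        hzero, zero_add, key v E hv0 hvE]
  -- Step 4: cleanup
  have step4 : (∫ v in Ioc E₀ E, g v * (π * Real.sqrt E - π * Real.sqrt v))
      = -π * ∫ v in E₀..E, (Real.sqrt v - Real.sqrt E) * Ψ' v := by
    have hcongr : (∫ v in E₀..E, (Real.sqrt v - Real.sqrt E) * Ψ' v)
        = ∫ v in E₀..E, (Real.sqrt v - Real.sqrt E) * g v := by
      apply intervalIntegral.integral_congr
      intro v hv
      rw [uIcc_of_le hE.le] at hv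
      beta_reduce
      rw [hgeq v hv]
    rw [hcongr, ← intervalIntegral.integral_of_le hE.le]
    have hpt : ∀ v, g v * (π * Real.sqrt E - π * Real.sqrt v)
        = (-π) * ((Real.sqrt v - Real.sqrt E) * g v) := fun v => by ring
    simp only [hpt]
    rw [intervalIntegral.integral_const_mul]
  have main : (-36 * ∫ u in E₀..E,
        (∫ v in E₀..u, Real.arctan (Real.sqrt ((u - v) / v)) * Ψ' v) / Real.sqrt (E - u))
      = 36 * π * ∫ v in E₀..E, (Real.sqrt v - Real.sqrt E) * Ψ' v := by
    rw [step1, step2, step3, step4]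
    ring
  refine ⟨main, main.trans ?_⟩
  congr 1
  apply intervalIntegral.integral_congr
  intro v hv
  rw [uIcc_of_le hE.le] at hv
  beta_reduce
  have hv0 : 0 < v := hE₀.trans_le hv.1
  have hsv : Real.sqrt v ≠ 0 := (Real.sqrt_ne_zero'.mpr hv0)
  have a2 : Real.sqrt v ^ 2 = v := Real.sq_sqrt hv0.le
  rw [Real.sqrt_mul hE0.le]
  field_simp
  linear_combination (Ψ' v) * a2
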